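/- The combinatorial Springer map for type B is well defined and lands in X_B^{*2}: let m ≥ 0, let λ be a partition of 2n − 2m in which every part has even multiplicity, and let χ : ℕ → ℕ satisfy m ≥ λ_i − χ(λ_i) ≥ λ_{i+1} − χ(λ_{i+1}), λ_i/2 ≤ χ(λ_i) ≤ λ_i, and χ(λ_i) ≥ χ(λ_{i+1}) for all i ≥ 1. Define μ_1 = m, μ_{i+1} = λ_{2i−1} − χ(λ_{2i−1}), and ν_i = χ(λ_{2i−1}) for i ≥ 1. Then μ and ν are partitions, |μ| + |ν| = n, and ν_i ≥ μ_{i+1} for all i. -/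

import Mathlib

open Finset

/-- A partition: weakly decreasing, finitely supported sequence of naturals (0-indexed). -/
def IsPartition (μ : ℕ → ℕ) : Prop :=
  Antitone μ ∧ ∃ N, ∀ i, N ≤ i → μ i = 0

/-- Membership in `P_2(n)`: a pair of partitions of total size `n`. -/
def PairP2 (n : ℕ) (p : (ℕ → ℕ) × (ℕ → ℕ)) : Prop :=
  IsPartition p.1 ∧ IsPartition p.2 ∧
    ∃ N, (∀ i, N ≤ i → p.1 i = 0 ∧ p.2 i = 0) ∧
      (∑ i ∈ range N, (p.1 i + p.2 i)) = n

/-- The dominance-type order on pairs of partitions (0-indexed: `p.1 0` is `μ_1`). -/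
def PairLE (p q : (ℕ → ℕ) × (ℕ → ℕ)) : Prop :=
  (∀ j, ∑ i ∈ range j, (p.1 i + p.2 i) ≤ ∑ i ∈ range j, (q.1 i + q.2 i)) ∧
  (∀ j, (∑ i ∈ range j, (p.1 i + p.2 i)) + p.1 j ≤
        (∑ i ∈ range j, (q.1 i + q.2 i)) + q.1 j)

/-- A downward-closed finset of naturals is an initial segment. -/
lemma mem_iff_lt_card_of_dclosed (T : Finset ℕ)
    (h : ∀ k i, k ≤ i → i ∈ T → k ∈ T) : ∀ i, i ∈ T ↔ i < T.card := by
  intro i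
  constructor
  · intro hi
    have hsub : range (i + 1) ⊆ T := by
      intro k hk
      exact h k i (by simpa [Nat.lt_succ_iff] using mem_range.mp hk) hi
    have := Finset.card_le_card hsub
    simpa using this
  · intro hi
    by_contra hiT
    have hsub : T ⊆ range i := by
      intro x hx
      rw [mem_range]
      by_contra hxi
      exact hiT (h i x (le_of_not_gt hxi) hx)
    have := Finset.card_le_card hsub
    simp at this
    omega

lemma even_card_ge (N : ℕ) (l : ℕ → ℕ) (hanti : Antitone l)
    (hmult : ∀ j, 0 < j → Even (((range N).filter fun i => l i = j).card)) :
    ∀ d j, 0 < j → l 0 + 1 ≤ j + d →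
      Even (((range N).filter fun i => j ≤ l i).card) := by
  intro d
  induction d with
  | zero =>
    intro j hj hd
    have : ((range N).filter fun i => j ≤ l i) = ∅ := by
      apply Finset.filter_false_of_mem
      intro i _
      have := hanti (Nat.zero_le i)
      omega
    simp [this]
  | succ d ih =>
    intro j hj hd
    have hsplit : ((range N).filter fun i => j ≤ l i) =
        ((range N).filter fun i => j + 1 ≤ l i) ∪
        ((range N).filter fun i => l i = j) := by
      rw [← Finset.filter_or]
      apply Finset.filter_congr
      intro i _
      constructor <;> intro h <;> omega
    have hdisj : Disjoint ((range N).filter fun i => j + 1 ≤ l i)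
        ((range N).filter fun i => l i = j) := by
      rw [Finset.disjoint_left]
      intro a ha hb
      simp only [mem_filter] at ha hb
      omega
    rw [hsplit, Finset.card_union_of_disjoint hdisj]
    exact Even.add (ih (j + 1) (by omega) (by omega)) (hmult j hj)

lemma pair_eq (N : ℕ) (l : ℕ → ℕ) (hanti : Antitone l) (hN : ∀ i, N ≤ i → l i = 0)
    (hmult : ∀ j, 0 < j → Even (((range N).filter fun i => l i = j).card)) :
    ∀ i, l (2 * i + 1) = l (2 * i) := by
  intro i
  rcases Nat.eq_zero_or_pos (l (2 * i)) with h0 | hpos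
  · have := hanti (show 2 * i ≤ 2 * i + 1 by omega)
    omega
  · set v := l (2 * i) with hv
    set T := ((range N).filter fun k => v ≤ l k) with hT
    have hdc : ∀ k i, k ≤ i → i ∈ T → k ∈ T := by
      intro k j hkj hj
      simp only [hT, mem_filter, mem_range] at hj ⊢
      exact ⟨by omega, le_trans hj.2 (hanti hkj)⟩
    have hmem := mem_iff_lt_card_of_dclosed T hdc
    have heven : Even T.card :=
      even_card_ge N l hanti hmult (l 0 + 1) v hpos (by omega)
    have h2i : 2 * i ∈ T := by
      simp only [hT, mem_filter, mem_range]
      refine ⟨?_, le_refl _⟩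
      by_contra h
      have := hN (2 * i) (by omega)
      omega
    have h2ilt := (hmem (2 * i)).mp h2i
    have h2i1 : 2 * i + 1 ∈ T := by
      rw [hmem]
      rcases heven with ⟨c, hc⟩
      omega
    have := (mem_filter.mp h2i1).2
    have := hanti (show 2 * i ≤ 2 * i + 1 by omega)
    omega

lemma sum_pairs (f : ℕ → ℕ) : ∀ N, ∑ i ∈ range N, (f (2 * i) + f (2 * i + 1)) =
    ∑ i ∈ range (2 * N), f i := by
  intro N
  induction N with
  | zero => simp
  | succ N ih =>
    rw [Finset.sum_range_succ, ih, show 2 * (N + 1) = 2 * N + 1 + 1 by omega,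
      Finset.sum_range_succ, Finset.sum_range_succ]
    ring

/-- the combinatorial Springer correspondence map for type `B`
is well defined and lands in `X_B^{*2}`. Here `l` is 0-indexed and
`μ = (m, λ_1 - χ(λ_1), λ_3 - χ(λ_3), …)`, `ν = (χ(λ_1), χ(λ_3), …)`. -/
theorem springer_typeB (n m N : ℕ) (l χ : ℕ → ℕ)
    (hanti : Antitone l) (hN : ∀ i, N ≤ i → l i = 0)
    (hsum : (∑ i ∈ range N, l i) + 2 * m = 2 * n)
    (hmult : ∀ j, 0 < j → Even (((range N).filter fun i => l i = j).card))
    (hm : ∀ i, l i - χ (l i) ≤ m)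
    (hχ1 : ∀ i, l i ≤ 2 * χ (l i))
    (hχ2 : ∀ i, χ (l i) ≤ l i)
    (hχ3 : ∀ i, χ (l (i + 1)) ≤ χ (l i))
    (hχ4 : ∀ i, l (i + 1) - χ (l (i + 1)) ≤ l i - χ (l i)) :
    Antitone (fun i => match i with
      | 0 => m
      | j + 1 => l (2 * j) - χ (l (2 * j))) ∧
    Antitone (fun i => χ (l (2 * i))) ∧
    (∀ i, N + 1 ≤ i → (l (2 * (i - 1)) - χ (l (2 * (i - 1)))) = 0) ∧
    (∀ i, N ≤ i → χ (l (2 * i)) = 0) ∧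
    (m + ∑ i ∈ range N, ((l (2 * i) - χ (l (2 * i))) + χ (l (2 * i)))) = n ∧
    (∀ i, l (2 * i) - χ (l (2 * i)) ≤ χ (l (2 * i))) := by
  refine ⟨?_, ?_, ?_, ?_, ?_, ?_⟩
  · apply antitone_nat_of_succ_le
    intro i
    match i with
    | 0 => exact hm 0
    | j + 1 =>
      show l (2 * (j + 1)) - χ (l (2 * (j + 1))) ≤ l (2 * j) - χ (l (2 * j))
      have h1 := hχ4 (2 * j)
      have h2 := hχ4 (2 * j + 1)
      rw [show 2 * (j + 1) = 2 * j + 1 + 1 by omega]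
      omega
  · apply antitone_nat_of_succ_le
    intro i
    have h1 := hχ3 (2 * i)
    have h2 := hχ3 (2 * i + 1)
    rw [show 2 * (i + 1) = 2 * i + 1 + 1 by omega]
    omega
  · intro i hi
    have : l (2 * (i - 1)) = 0 := hN _ (by omega)
    omega
  · intro i hi
    have h0 : l (2 * i) = 0 := hN _ (by omega)
    have := hχ2 (2 * i)
    omega
  · have hpair := pair_eq N l hanti hN hmult
    have hterm : ∀ i, (l (2 * i) - χ (l (2 * i))) + χ (l (2 * i)) = l (2 * i) := by
      intro i
      have := hχ2 (2 * i)
      omega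
    have h1 : ∑ i ∈ range N, ((l (2 * i) - χ (l (2 * i))) + χ (l (2 * i)))
        = ∑ i ∈ range N, l (2 * i) := Finset.sum_congr rfl fun i _ => hterm i
    have h2 : ∑ i ∈ range N, l i = ∑ i ∈ range (2 * N), l i := by
      apply Finset.sum_subset
      · exact Finset.range_subset_range.mpr (by omega)
      · intro x _ hx
        exact hN x (by simpa using hx)
    have h3 : ∑ i ∈ range N, (l (2 * i) + l (2 * i + 1)) = ∑ i ∈ range N, l i := by
      rw [sum_pairs l N, ← h2]
    have h4 : ∑ i ∈ range N, (l (2 * i) + l (2 * i + 1)) =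
        2 * ∑ i ∈ range N, l (2 * i) := by
      rw [Finset.mul_sum]
      apply Finset.sum_congr rfl
      intro i _
      rw [hpair i]; ring
    rw [h1]
    omega
  · intro i
    have := hχ1 (2 * i)
    omega
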